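/- Let A be a countable simple von Neumann regular ring which is not semisimple, and let Q be an injective right A-module. Then the functor Hom_A(Q, ?) : Mod-A → Ab preserves small coproducts. -/

import Mathlib

open DirectSum

section VNR
variable {R : Type} [Ring R]

lemma idem_aux {a x : R} (h : a * x * a = a) : (x * a) * (x * a) = x * a := by
  calc (x * a) * (x * a) = x * (a * x * a) := by noncomm_ring
  _ = x * a := by rw [h]

/-- In a vNr ring, every principal left ideal is generated by an idempotent. -/
lemma vnr_span_idem (hvnr : ∀ a : R, ∃ x : R, a * x * a = a) (a : R) :
    ∃ e : R, e * e = e ∧ Submodule.span R {a} = Submodule.span R {e} := by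
  obtain ⟨x, hx⟩ := hvnr a
  refine ⟨x * a, idem_aux hx, le_antisymm ?_ ?_⟩
  · rw [Submodule.span_singleton_le_iff_mem, Submodule.mem_span_singleton]
    exact ⟨a, by rw [smul_eq_mul, ← mul_assoc, hx]⟩
  · rw [Submodule.span_singleton_le_iff_mem, Submodule.mem_span_singleton]
    exact ⟨x, rfl⟩

/-- In a vNr ring, every f.g. left ideal is generated by an idempotent. -/
lemma vnr_fg_idem (hvnr : ∀ a : R, ∃ x : R, a * x * a = a) (I : Submodule R R) (hI : I.FG) :
    ∃ e : R, e * e = e ∧ I = Submodule.span R {e} := by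
  suffices h : ∃ a : R, I = Submodule.span R {a} by
    obtain ⟨a, rfl⟩ := h
    obtain ⟨e, he, h2⟩ := vnr_span_idem hvnr a
    exact ⟨e, he, h2⟩
  refine Submodule.fg_induction (motive := fun J _ => ∃ a : R, J = Submodule.span R {a})
    (fun x => ⟨x, rfl⟩) ?_ I hI
  rintro M₁ M₂ _ _ ⟨a, rfl⟩ ⟨b, rfl⟩
  obtain ⟨e, he, hspan⟩ := vnr_span_idem hvnr a
  rw [hspan]
  have hb : Submodule.span R {e} ⊔ Submodule.span R {b}
      = Submodule.span R {e} ⊔ Submodule.span R {b - b * e} := by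
    apply le_antisymm
    · refine sup_le le_sup_left ?_
      rw [Submodule.span_singleton_le_iff_mem]
      have h1 : b - b * e ∈ Submodule.span R {e} ⊔ Submodule.span R {b - b * e} :=
        Submodule.mem_sup_right (Submodule.mem_span_singleton_self _)
      have h2 : b * e ∈ Submodule.span R {e} ⊔ Submodule.span R {b - b * e} :=
        Submodule.mem_sup_left (Submodule.mem_span_singleton.2 ⟨b, rfl⟩)
      simpa using add_mem h1 h2
    · refine sup_le le_sup_left ?_
      rw [Submodule.span_singleton_le_iff_mem]
      have h2 : b * e ∈ Submodule.span R {e} ⊔ Submodule.span R {b} :=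
        Submodule.mem_sup_left (Submodule.mem_span_singleton.2 ⟨b, rfl⟩)
      have h1 : b ∈ Submodule.span R {e} ⊔ Submodule.span R {b} :=
        Submodule.mem_sup_right (Submodule.mem_span_singleton_self b)
      exact sub_mem h1 h2
  rw [hb]
  set c₀ := b - b * e with hc₀
  obtain ⟨y, hy⟩ := hvnr c₀
  set c := y * c₀ with hc
  have hcc : c * c = c := idem_aux hy
  have hc₀e : c₀ * e = 0 := by rw [hc₀, sub_mul, mul_assoc, he, sub_self]
  have hce : c * e = 0 := by rw [hc, mul_assoc, hc₀e, mul_zero]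
  have hspan2 : Submodule.span R {c₀} = Submodule.span R {c} := by
    apply le_antisymm <;> rw [Submodule.span_singleton_le_iff_mem, Submodule.mem_span_singleton]
    · exact ⟨c₀, by rw [smul_eq_mul, hc, ← mul_assoc, hy]⟩
    · exact ⟨y, rfl⟩
  rw [hspan2]
  refine ⟨e + c - e * c, le_antisymm (sup_le ?_ ?_) ?_⟩
  · rw [Submodule.span_singleton_le_iff_mem, Submodule.mem_span_singleton]
    refine ⟨e, ?_⟩
    rw [smul_eq_mul]
    calc e * (e + c - e * c) = e * e + e * c - (e * e) * c := by noncomm_ring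
    _ = e := by rw [he]; noncomm_ring
  · rw [Submodule.span_singleton_le_iff_mem, Submodule.mem_span_singleton]
    refine ⟨c, ?_⟩
    rw [smul_eq_mul]
    calc c * (e + c - e * c) = c * e + c * c - (c * e) * c := by noncomm_ring
    _ = c := by rw [hce, hcc]; noncomm_ring
  · rw [Submodule.span_singleton_le_iff_mem]
    have h1 : e ∈ Submodule.span R {e} ⊔ Submodule.span R {c} :=
      Submodule.mem_sup_left (Submodule.mem_span_singleton_self e)
    have h2 : c ∈ Submodule.span R {e} ⊔ Submodule.span R {c} :=
      Submodule.mem_sup_right (Submodule.mem_span_singleton_self c)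
    have h3 : e * c ∈ Submodule.span R {e} ⊔ Submodule.span R {c} :=
      Submodule.mem_sup_right (Submodule.mem_span_singleton.2 ⟨e, rfl⟩)
    exact sub_mem (add_mem h1 h2) h3

lemma idem_compl (e : R) (he : e * e = e) :
    IsCompl (Submodule.span R {e}) (Submodule.span R {1 - e}) := by
  constructor
  · rw [disjoint_iff, eq_bot_iff]
    rintro x ⟨hx1, hx2⟩
    rw [SetLike.mem_coe, Submodule.mem_span_singleton] at hx1 hx2
    obtain ⟨r, hr⟩ := hx1
    obtain ⟨s, hs⟩ := hx2
    have h1 : x * e = x := by rw [← hr, smul_eq_mul, mul_assoc, he]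
    have h2 : x * e = 0 := by
      rw [← hs, smul_eq_mul]
      calc s * (1 - e) * e = s * (e - e * e) := by noncomm_ring
      _ = 0 := by rw [he, sub_self, mul_zero]
    rw [Submodule.mem_bot, ← h1, h2]
  · rw [codisjoint_iff, eq_top_iff]
    intro x _
    have h1 : x * e ∈ Submodule.span R {e} := Submodule.mem_span_singleton.2 ⟨x, rfl⟩
    have h2 : x * (1 - e) ∈ Submodule.span R {1 - e} := Submodule.mem_span_singleton.2 ⟨x, rfl⟩
    have hx : x = x * e + x * (1 - e) := by noncomm_ring
    exact hx ▸ Submodule.add_mem _ (Submodule.mem_sup_left h1) (Submodule.mem_sup_right h2)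

/-- A non-semisimple vNr ring has a non-f.g. left ideal. -/
lemma vnr_not_ss_exists_nfg (hvnr : ∀ a : R, ∃ x : R, a * x * a = a)
    (hnss : ¬ IsSemisimpleRing R) : ∃ L : Submodule R R, ¬ L.FG := by
  by_contra h
  push_neg at h
  refine hnss { exists_isCompl := fun L => ?_ }
  obtain ⟨e, he, hL⟩ := vnr_fg_idem hvnr L (h L)
  exact ⟨Submodule.span R {1 - e}, hL ▸ idem_compl e he⟩

lemma vnr_step (hvnr : ∀ a : R, ∃ x : R, a * x * a = a) {u : R} (hu : u * u = u)
    {L : Submodule R R} (hLu : L ≤ Submodule.span R {u}) (hL : ¬ L.FG) :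
    ∃ e : R, e * e = e ∧ e ≠ 0 ∧ u * e = e ∧ e * u = e ∧
      ∃ L' : Submodule R R, L' ≤ Submodule.span R {u - e} ∧ ¬ L'.FG := by
  have hLbot : L ≠ ⊥ := fun h => hL (h ▸ ⟨∅, by simp⟩)
  obtain ⟨a, haL, ha⟩ := Submodule.exists_mem_ne_zero_of_ne_bot hLbot
  obtain ⟨f, hf, hfa⟩ := vnr_span_idem hvnr a
  have hfL : f ∈ L := by
    have : Submodule.span R {a} ≤ L := (Submodule.span_singleton_le_iff_mem a L).2 haL
    exact this (hfa ▸ Submodule.mem_span_singleton_self f)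
  have hf0 : f ≠ 0 := by
    rintro rfl
    apply ha
    have h' : a ∈ Submodule.span R {(0:R)} := hfa ▸ Submodule.mem_span_singleton_self a
    rw [Submodule.span_zero_singleton, Submodule.mem_bot] at h'
    exact h'
  have hfu : f * u = f := by
    obtain ⟨r, hr⟩ := Submodule.mem_span_singleton.1 (hLu hfL)
    rw [← hr, smul_eq_mul, mul_assoc, hu]
  set e := u * f with hedef
  have he : e * e = e := by
    rw [hedef]
    calc u * f * (u * f) = u * (f * u) * f := by noncomm_ring
    _ = u * f := by rw [hfu, mul_assoc, hf]
  have he0 : e ≠ 0 := by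
    intro h0
    apply hf0
    have : f * e = f := by
      rw [hedef, ← mul_assoc, hfu, hf]
    rw [← this, h0, mul_zero]
  have hue : u * e = e := by rw [hedef, ← mul_assoc, hu]
  have heu : e * u = e := by rw [hedef, mul_assoc, hfu]
  have heL : e ∈ L := by
    rw [hedef, ← smul_eq_mul]
    exact Submodule.smul_mem L u hfL
  refine ⟨e, he, he0, hue, heu, ?_⟩
  set ρ : R →ₗ[R] R := LinearMap.toSpanSingleton R R (u - e) with hρ
  refine ⟨L.map ρ, ?_, ?_⟩
  · rintro z ⟨w, hw, rfl⟩
    exact Submodule.mem_span_singleton.2 ⟨w, rfl⟩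
  · intro hfg
    apply hL
    refine Submodule.fg_of_fg_map_of_fg_inf_ker ρ hfg ?_
    have hker : L ⊓ LinearMap.ker ρ = Submodule.span R {e} := by
      apply le_antisymm
      · rintro z ⟨hz1, hz2⟩
        rw [SetLike.mem_coe, LinearMap.mem_ker, hρ, LinearMap.toSpanSingleton_apply] at hz2
        obtain ⟨s, hs⟩ := Submodule.mem_span_singleton.1 (hLu hz1)
        have hzu : z * u = z := by rw [← hs, smul_eq_mul, mul_assoc, hu]
        have : z * u - z * e = 0 := by
          rw [← mul_sub]
          simpa [smul_eq_mul] using hz2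
        rw [hzu, sub_eq_zero] at this
        exact Submodule.mem_span_singleton.2 ⟨z, by rw [smul_eq_mul, ← this]⟩
      · rw [Submodule.span_singleton_le_iff_mem]
        refine ⟨heL, ?_⟩
        rw [SetLike.mem_coe, LinearMap.mem_ker, hρ, LinearMap.toSpanSingleton_apply,
          smul_eq_mul, mul_sub, heu, he, sub_self]
    rw [hker]
    exact Submodule.fg_span_singleton e

/-- A non-semisimple vNr ring contains an infinite sequence of nonzero pairwise
orthogonal idempotents. -/
lemma vnr_orth_seq (hvnr : ∀ a : R, ∃ x : R, a * x * a = a) (hnss : ¬ IsSemisimpleRing R) :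
    ∃ e : ℕ → R, (∀ n, e n * e n = e n) ∧ (∀ n, e n ≠ 0) ∧
      ∀ m n, m ≠ n → e m * e n = 0 := by
  obtain ⟨L₀, hL₀⟩ := vnr_not_ss_exists_nfg hvnr hnss
  let St := {p : R × Submodule R R // p.1 * p.1 = p.1 ∧ p.2 ≤ Submodule.span R {p.1} ∧ ¬ p.2.FG}
  have step : ∀ s : St, ∃ e : R, e * e = e ∧ e ≠ 0 ∧ s.1.1 * e = e ∧ e * s.1.1 = e ∧
      ∃ L', L' ≤ Submodule.span R {s.1.1 - e} ∧ ¬ L'.FG :=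
    fun s => vnr_step hvnr s.2.1 s.2.2.1 s.2.2.2
  choose E hE1 hE2 hE3 hE4 L'f hL'1 hL'2 using step
  have s₀ : St := ⟨(1, L₀), by simp, fun x _ => Submodule.mem_span_singleton.2 ⟨x, by simp⟩, hL₀⟩
  let next : St → St := fun s => ⟨(s.1.1 - E s, L'f s), by
    constructor
    · have h1 := hE1 s; have h3 := hE3 s; have h4 := hE4 s
      calc (s.1.1 - E s) * (s.1.1 - E s)
          = s.1.1 * s.1.1 - s.1.1 * E s - (E s * s.1.1 - E s * E s) := by noncomm_ring
      _ = s.1.1 - E s := by rw [s.2.1, h3, h4, h1]; noncomm_ring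
    · exact ⟨hL'1 s, hL'2 s⟩⟩
  let seq : ℕ → St := fun n => Nat.rec s₀ (fun _ s => next s) n
  have hu1 : ∀ n, (seq (n + 1)).1.1 = (seq n).1.1 - E (seq n) := fun n => rfl
  have key : ∀ m n, m < n → (seq n).1.1 * E (seq m) = 0 ∧ E (seq m) * (seq n).1.1 = 0 := by
    intro m n hmn
    induction n with
    | zero => omega
    | succ n ih =>
      rcases Nat.lt_succ_iff_lt_or_eq.1 hmn with h | rfl
      · obtain ⟨ih1, ih2⟩ := ih h
        constructor
        · rw [hu1, sub_mul, ih1]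
          rw [show E (seq n) * E (seq m) = 0 by rw [← hE4 (seq n), mul_assoc, ih1, mul_zero]]
          rw [sub_zero]
        · rw [hu1, mul_sub, ih2]
          rw [show E (seq m) * E (seq n) = 0 by rw [← hE3 (seq n), ← mul_assoc, ih2, zero_mul]]
          rw [sub_zero]
      · constructor
        · rw [hu1, sub_mul, hE3 (seq m), hE1 (seq m), sub_self]
        · rw [hu1, mul_sub, hE4 (seq m), hE1 (seq m), sub_self]
  refine ⟨fun n => E (seq n), fun n => hE1 (seq n), fun n => hE2 (seq n), ?_⟩
  intro m n hmn
  rcases Nat.lt_or_ge m n with h | h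
  · show E (seq m) * E (seq n) = 0
    rw [← hE3 (seq n), ← mul_assoc, (key m n h).2, zero_mul]
  · have h' : n < m := by omega
    show E (seq m) * E (seq n) = 0
    rw [← hE4 (seq m), mul_assoc, (key n m h').1, mul_zero]
end VNR

open MulOpposite

set_option maxHeartbeats 1000000 in
/-- In a simple ring `A`, for any nonzero `e : A` and proper submodule `N` of a right
`A`-module `Q`, some element of the form `(t * op e) • y` escapes `N`. -/
lemma simple_smul_escape {A : Type} [Ring A] [IsSimpleRing A] {Q : Type} [AddCommGroup Q]
    [Module Aᵐᵒᵖ Q] {e : A} (he0 : e ≠ 0) {N : Submodule Aᵐᵒᵖ Q} (hN : N ≠ ⊤) :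
    ∃ (t : Aᵐᵒᵖ) (y : Q), (t * op e) • y ∉ N := by
  classical
  set S : Set Aᵐᵒᵖ := {x | ∃ t s : Aᵐᵒᵖ, x = t * op e * s} with hS
  set J : Submodule Aᵐᵒᵖ Aᵐᵒᵖ := Submodule.span Aᵐᵒᵖ S with hJ
  have hJr : ∀ x ∈ J, ∀ s : Aᵐᵒᵖ, x * s ∈ J := by
    intro x hx
    induction hx using Submodule.span_induction with
    | mem z hz =>
      intro s
      obtain ⟨t, s', rfl⟩ := hz
      exact Submodule.subset_span ⟨t, s' * s, by noncomm_ring⟩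
    | zero => intro s; simpa using J.zero_mem
    | add a b _ _ ha hb => intro s; rw [add_mul]; exact J.add_mem (ha s) (hb s)
    | smul r a _ ha =>
      intro s
      rw [smul_eq_mul, mul_assoc, ← smul_eq_mul]
      exact J.smul_mem r (ha s)
  have hone : (1 : Aᵐᵒᵖ) ∈ J := by
    let T : TwoSidedIdeal A := TwoSidedIdeal.mk' {a : A | op a ∈ J}
      (by simpa using J.zero_mem)
      (fun {x y} hx hy => by simpa [op_add] using J.add_mem hx hy)
      (fun {x} hx => by simpa [op_neg] using J.neg_mem hx)
      (fun {x y} hy => by simpa [op_mul, smul_eq_mul] using hJr _ hy (op x))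
      (fun {x y} hx => by
        have := J.smul_mem (op y) hx
        simpa [op_mul, smul_eq_mul] using this)
    have hmem : ∀ a : A, a ∈ T ↔ op a ∈ J := fun a =>
      TwoSidedIdeal.mem_mk' _ _ _ _ _ _ a
    have heT : e ∈ T := (hmem e).2 <| Submodule.subset_span ⟨1, 1, by noncomm_ring⟩
    have hT : T = ⊤ := by
      haveI := IsSimpleRing.simple (R := A)
      refine (eq_bot_or_eq_top T).resolve_left fun h => ?_
      rw [h] at heT
      exact he0 ((TwoSidedIdeal.mem_bot A).1 heT)
    have : (1 : A) ∈ T := hT ▸ TwoSidedIdeal.mem_top A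
    simpa using (hmem 1).1 this
  set P : Submodule Aᵐᵒᵖ Q := Submodule.span Aᵐᵒᵖ {z : Q | ∃ (t : Aᵐᵒᵖ) (y : Q), z = (t * op e) • y}
    with hP
  have hJP : ∀ x ∈ J, ∀ y : Q, x • y ∈ P := by
    intro x hx
    induction hx using Submodule.span_induction with
    | mem z hz =>
      intro y
      obtain ⟨t, s, rfl⟩ := hz
      rw [mul_smul]
      exact Submodule.subset_span ⟨t, s • y, rfl⟩
    | zero => intro y; simpa using P.zero_mem
    | add a b _ _ ha hb => intro y; rw [add_smul]; exact P.add_mem (ha y) (hb y)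
    | smul r a _ ha =>
      intro y
      rw [smul_eq_mul, mul_smul]
      exact P.smul_mem r (ha y)
  have hPtop : P = ⊤ := by
    rw [eq_top_iff]
    intro z _
    simpa using hJP 1 hone z
  by_contra hcon
  push_neg at hcon
  apply hN
  rw [eq_top_iff, ← hPtop, hP]
  rw [Submodule.span_le]
  rintro z ⟨t, y, rfl⟩
  exact hcon t y

/-- The canonical map `⨁ᵢ Hom_A(Q, Mᵢ) → Hom_A(Q, ⨁ᵢ Mᵢ)`. -/
noncomputable def homCoprodMap (R : Type) [Ring R] (Q : Type) [AddCommGroup Q] [Module R Q]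
    (ι : Type) (M : ι → Type) [∀ i, AddCommGroup (M i)] [∀ i, Module R (M i)] :
    DirectSum ι (fun i => Q →ₗ[R] M i) →+ (Q →ₗ[R] DirectSum ι M) :=
  letI := Classical.decEq ι
  DirectSum.toAddMonoid (fun i => AddMonoidHom.mk'
    (fun f => (DirectSum.lof R ι M i).comp f) (fun f g => by ext q; simp))

lemma homCoprodMap_of (R : Type) [Ring R] (Q : Type) [AddCommGroup Q] [Module R Q]
    (ι : Type) (inst : DecidableEq ι) (M : ι → Type) [∀ i, AddCommGroup (M i)]
    [∀ i, Module R (M i)] (i : ι) (f : Q →ₗ[R] M i) :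
    homCoprodMap R Q ι M (@DirectSum.of ι (fun i => Q →ₗ[R] M i) _ inst i f)
      = (@DirectSum.lof R _ ι M _ _ inst i).comp f := by
  have h : inst = Classical.decEq ι := Subsingleton.elim _ _
  subst h
  letI := Classical.decEq ι
  exact DirectSum.toAddMonoid_of (fun i => AddMonoidHom.mk'
    (fun (f : Q →ₗ[R] M i) => (DirectSum.lof R ι M i).comp f) (fun f g => by ext q; simp)) i f

theorem stmt8 (A : Type) [Ring A] [Countable A] [IsSimpleRing A]
    (hvnr : ∀ a : A, ∃ x : A, a * x * a = a) (hnss : ¬ IsSemisimpleRing A)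
    (Q : Type) [AddCommGroup Q] [Module Aᵐᵒᵖ Q] (hQ : Module.Injective Aᵐᵒᵖ Q)
    (ι : Type) (M : ι → Type) [∀ i, AddCommGroup (M i)] [∀ i, Module Aᵐᵒᵖ (M i)] :
    Function.Bijective (homCoprodMap Aᵐᵒᵖ Q ι M) := by
  classical
  have hcomp : ∀ (x : DirectSum ι (fun i => Q →ₗ[Aᵐᵒᵖ] M i)) (j : ι),
      (DirectSum.component Aᵐᵒᵖ ι M j) ∘ₗ (homCoprodMap Aᵐᵒᵖ Q ι M x) = x j := by
    intro x
    induction x using DirectSum.induction_on with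
    | zero => intro j; simp
    | of i f =>
      intro j
      rw [homCoprodMap_of]
      ext q
      by_cases h : i = j
      · subst h
        simp [DirectSum.component.of]
      · simp [DirectSum.component.of, h, DirectSum.of_eq_of_ne _ _ _ (Ne.symm h)]
    | add x y hx hy =>
      intro j
      rw [map_add]
      ext q
      simp only [LinearMap.comp_apply, LinearMap.add_apply, map_add, DirectSum.add_apply]
      have hx' := congrArg (fun F => F q) (hx j)
      have hy' := congrArg (fun F => F q) (hy j)
      simp only [LinearMap.comp_apply] at hx' hy'
      rw [hx', hy']
  constructor
  · intro x y hxy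
    apply DFinsupp.ext
    intro j
    rw [← hcomp x j, ← hcomp y j, hxy]
  · intro g
    have key : ∃ S : Finset ι, ∀ (q : Q) (j : ι), j ∉ S → g q j = 0 := by
      by_contra hkey
      push_neg at hkey
      choose qS jS hjS hgS using hkey
      let Sn : ℕ → Finset ι := fun n => Nat.rec ∅ (fun _ s => insert (jS s) s) n
      have hSn : ∀ n, Sn (n + 1) = insert (jS (Sn n)) (Sn n) := fun n => rfl
      have hmono : ∀ a b, a ≤ b → Sn a ⊆ Sn b := by
        intro a b hab
        induction b with
        | zero => simpa [Nat.le_zero.1 hab] using Finset.Subset.refl _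
        | succ b ih =>
          rcases Nat.lt_succ_iff_lt_or_eq.1 (Nat.lt_succ_of_le hab) with h | rfl
          · exact (ih (by omega)).trans (by rw [hSn]; exact Finset.subset_insert _ _)
          · exact Finset.Subset.refl _
      set iseq : ℕ → ι := fun n => jS (Sn n) with hiseq
      have hinj : Function.Injective iseq := by
        intro m n hmn
        by_contra hne
        rcases Nat.lt_or_ge m n with h | h
        · have : iseq m ∈ Sn n := hmono (m+1) n h (by rw [hSn]; exact Finset.mem_insert_self _ _)
          rw [hmn] at this
          exact hjS (Sn n) this
        · have h' : n < m := by omega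
          have : iseq n ∈ Sn m := hmono (n+1) m h' (by rw [hSn]; exact Finset.mem_insert_self _ _)
          rw [← hmn] at this
          exact hjS (Sn m) this
      -- proper submodules
      set Qs : ℕ → Submodule Aᵐᵒᵖ Q :=
        fun n => LinearMap.ker ((DirectSum.component Aᵐᵒᵖ ι M (iseq n)) ∘ₗ g) with hQs
      have hQsne : ∀ n, Qs n ≠ ⊤ := by
        intro n h
        apply hgS (Sn n)
        have : qS (Sn n) ∈ Qs n := h ▸ Submodule.mem_top
        simp [hQs, LinearMap.mem_ker] at this
        exact this
      -- orthogonal idempotents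
      obtain ⟨e, he, he0, horth⟩ := vnr_orth_seq hvnr hnss
      have escape : ∀ n, ∃ (t : Aᵐᵒᵖ) (y : Q), (t * op (e n)) • y ∉ Qs n :=
        fun n => simple_smul_escape (he0 n) (hQsne n)
      choose t y hty using escape
      -- the ideal generated by the idempotents
      set I : Submodule Aᵐᵒᵖ Aᵐᵒᵖ := Submodule.span Aᵐᵒᵖ (Set.range fun n => op (e n)) with hI
      have hfin : ∀ x ∈ I, Set.Finite {n : ℕ | x * op (e n) ≠ 0} := by
        intro x hx
        induction hx using Submodule.span_induction with
        | mem z hz =>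
          obtain ⟨m, rfl⟩ := hz
          refine Set.Finite.subset (Set.finite_singleton m) ?_
          intro n hn
          simp only [Set.mem_setOf_eq] at hn
          by_contra hne
          apply hn
          rw [← op_mul, horth n m (by simpa using hne), op_zero]
        | zero => exact Set.Finite.subset (Set.finite_empty) (by simp)
        | add a b _ _ ha hb =>
          refine Set.Finite.subset (ha.union hb) ?_
          intro n hn
          simp only [Set.mem_setOf_eq, Set.mem_union] at hn ⊢
          by_contra hc
          push_neg at hc
          apply hn
          rw [add_mul, hc.1, hc.2, add_zero]
        | smul r a _ ha =>
          refine Set.Finite.subset ha ?_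
          intro n hn
          simp only [Set.mem_setOf_eq] at hn ⊢
          intro hc
          apply hn
          rw [smul_eq_mul, mul_assoc, hc, mul_zero]
      have hsupp : ∀ (x : Aᵐᵒᵖ), x ∈ I →
          (Function.support fun n => (x * op (e n)) • y n).Finite := by
        intro x hx
        refine Set.Finite.subset (hfin x hx) ?_
        intro n hn
        simp only [Function.mem_support] at hn
        simp only [Set.mem_setOf_eq]
        intro hc
        apply hn
        rw [hc, zero_smul]
      -- the linear map on I
      set φ : I →ₗ[Aᵐᵒᵖ] Q :=
        { toFun := fun x => ∑ᶠ n, ((x : Aᵐᵒᵖ) * op (e n)) • y n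
          map_add' := by
            intro a b
            show (∑ᶠ n, (((a : Aᵐᵒᵖ) + (b : Aᵐᵒᵖ)) * op (e n)) • y n)
                = (∑ᶠ n, ((a : Aᵐᵒᵖ) * op (e n)) • y n) + ∑ᶠ n, ((b : Aᵐᵒᵖ) * op (e n)) • y n
            have h : (fun n => (((a : Aᵐᵒᵖ) + (b : Aᵐᵒᵖ)) * op (e n)) • y n)
                = fun n => ((a : Aᵐᵒᵖ) * op (e n)) • y n + ((b : Aᵐᵒᵖ) * op (e n)) • y n := by
              funext n
              rw [add_mul, add_smul]
            rw [h, finsum_add_distrib (hsupp a a.2) (hsupp b b.2)]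
          map_smul' := by
            intro r a
            show (∑ᶠ n, ((r • (a : Aᵐᵒᵖ)) * op (e n)) • y n)
                = r • ∑ᶠ n, ((a : Aᵐᵒᵖ) * op (e n)) • y n
            have h : (fun n => ((r • (a : Aᵐᵒᵖ)) * op (e n)) • y n)
                = fun n => r • (((a : Aᵐᵒᵖ) * op (e n)) • y n) := by
              funext n
              rw [smul_eq_mul, mul_assoc, mul_smul]
            rw [h, ← smul_finsum' r (hsupp a a.2)] } with hφ
      obtain ⟨ψ, hψ⟩ := hQ.out I.subtype (Submodule.injective_subtype I) φ
      set q₀ : Q := ψ 1 with hq₀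
      have hq : ∀ n, (t n * op (e n)) • q₀ ∉ Qs n := by
        intro n
        have hxI : t n * op (e n) ∈ I := by
          rw [← smul_eq_mul]
          exact I.smul_mem (t n) (Submodule.subset_span ⟨n, rfl⟩)
        have h1 : ψ (t n * op (e n)) = φ ⟨t n * op (e n), hxI⟩ := by
          simpa using hψ ⟨t n * op (e n), hxI⟩
        have h2 : ψ (t n * op (e n)) = (t n * op (e n)) • q₀ := by
          rw [hq₀, ← map_smul, smul_eq_mul, mul_one]
        have h3 : φ ⟨t n * op (e n), hxI⟩ = (t n * op (e n)) • y n := by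
          rw [hφ]
          simp only [LinearMap.coe_mk, AddHom.coe_mk]
          refine Eq.trans (finsum_eq_single _ n ?_) ?_
          · intro m hm
            have hz : op (e n) * op (e m) = 0 := by
              rw [← op_mul, horth m n hm, op_zero]
            rw [mul_assoc, hz, mul_zero, zero_smul]
          · rw [mul_assoc, ← op_mul, he n]
        have heq : (t n * op (e n)) • q₀ = (t n * op (e n)) • y n := by
          rw [← h2, h1, h3]
        rw [heq]
        exact hty n
      -- find m with q₀ ∈ Qs m
      have hfin2 : Set.Finite {n : ℕ | g q₀ (iseq n) ≠ 0} := by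
        have h1 : Set.Finite {j : ι | g q₀ j ≠ 0} := DFinsupp.finite_support (g q₀)
        have h2 : {n : ℕ | g q₀ (iseq n) ≠ 0} = iseq ⁻¹' {j : ι | g q₀ j ≠ 0} := rfl
        rw [h2]
        exact Set.Finite.preimage (Set.injOn_of_injective hinj) h1
      obtain ⟨m, hm⟩ := (Set.Finite.infinite_compl hfin2).nonempty
      simp only [Set.mem_compl_iff, Set.mem_setOf_eq, not_not] at hm
      have hq₀m : q₀ ∈ Qs m := by
        rw [hQs, LinearMap.mem_ker]
        exact hm
      exact hq m (Submodule.smul_mem _ _ hq₀m)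
    obtain ⟨S, hS⟩ := key
    refine ⟨∑ i ∈ S, DirectSum.of (fun i => Q →ₗ[Aᵐᵒᵖ] M i) i
      ((DirectSum.component Aᵐᵒᵖ ι M i) ∘ₗ g), ?_⟩
    rw [map_sum]
    ext q : 1
    apply DFinsupp.ext
    intro j
    have h1 : ∀ i : ι, homCoprodMap Aᵐᵒᵖ Q ι M (DirectSum.of (fun i => Q →ₗ[Aᵐᵒᵖ] M i) i
        ((DirectSum.component Aᵐᵒᵖ ι M i) ∘ₗ g))
        = (DirectSum.lof Aᵐᵒᵖ ι M i).comp ((DirectSum.component Aᵐᵒᵖ ι M i) ∘ₗ g) :=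
      fun i => homCoprodMap_of _ _ _ _ _ _ _
    have h2 : (∑ i ∈ S, homCoprodMap Aᵐᵒᵖ Q ι M (DirectSum.of (fun i => Q →ₗ[Aᵐᵒᵖ] M i) i
        ((DirectSum.component Aᵐᵒᵖ ι M i) ∘ₗ g))) q
        = ∑ i ∈ S, DirectSum.lof Aᵐᵒᵖ ι M i (g q i) := by
      rw [LinearMap.sum_apply]
      refine Finset.sum_congr rfl fun i _ => ?_
      rw [h1 i]
      rfl
    rw [h2]
    rw [DFinsupp.finset_sum_apply]
    by_cases hj : j ∈ S
    · rw [Finset.sum_eq_single_of_mem j hj]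
      · exact DirectSum.lof_apply Aᵐᵒᵖ j _
      · intro i _ hij
        rw [DirectSum.lof_eq_of, DirectSum.of_eq_of_ne _ _ _ (Ne.symm hij)]
    · rw [Finset.sum_eq_zero, hS q j hj]
      intro i hi
      rw [DirectSum.lof_eq_of, DirectSum.of_eq_of_ne _ _ _ (fun h => hj (by rw [h]; exact hi))]
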